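/- Let k, l, s, n be integers with 1 ≤ l < k ≤ s ≤ n. Then ∑_{j=0}^{k−1} (−1)^{j} · C(n+2k−s−1, k−j−1) · C(n−s+j, n−s) · C(s−j−1, 2l−1) = ∑_{j=0}^{k−1} (−1)^{j} · C(n+2k−s−1, k−j−1) · C(n−s+j, n−s) · C(n+j, 2l−1). -/

import Mathlib

open Finset

lemma alt_sum (M : ℕ) : ∀ K : ℕ,
    ∑ i ∈ range (K+1), (-1:ℤ)^i * ((M+1).choose i : ℤ) = (-1)^K * (M.choose K : ℤ)
  | 0 => by simp
  | (K+1) => by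
    rw [sum_range_succ, alt_sum M K, Nat.choose_succ_succ']
    push_cast
    ring

lemma neg_one_pow_sub {K j : ℕ} (h : j ≤ K) : (-1:ℤ)^(K-j) = (-1)^K * (-1)^j := by
  have hsq : (-1:ℤ)^j * (-1)^j = 1 := by
    rw [← pow_add]; exact Even.neg_one_pow ⟨j, rfl⟩
  calc (-1:ℤ)^(K-j) = (-1:ℤ)^(K-j) * ((-1)^j * (-1)^j) := by rw [hsq, mul_one]
    _ = (-1:ℤ)^(K-j+j) * (-1)^j := by rw [pow_add]; ring
    _ = (-1:ℤ)^K * (-1)^j := by rw [Nat.sub_add_cancel h]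

lemma kernel (m : ℕ) : ∀ (M K : ℕ),
    ∑ j ∈ range (K+1), (-1:ℤ)^j * ((m+1+M).choose (K-j) : ℤ) * ((m+j).choose m : ℤ)
      = (M.choose K : ℤ) := by
  induction m with
  | zero =>
    intro M K
    rw [← Finset.sum_range_reflect]
    have h1 : ∀ j ∈ range (K+1),
        (-1:ℤ)^(K+1-1-j) * ((0+1+M).choose (K-(K+1-1-j)) : ℤ) * ((0+(K+1-1-j)).choose 0 : ℤ)
        = (-1:ℤ)^K * ((-1:ℤ)^j * ((M+1).choose j : ℤ)) := by
      intro j hj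
      simp only [mem_range] at hj
      have hj' : j ≤ K := by omega
      have e1 : K + 1 - 1 - j = K - j := by omega
      have e2 : K - (K - j) = j := by omega
      have e3 : 0 + 1 + M = M + 1 := by omega
      rw [e1, e2, e3, Nat.choose_zero_right, neg_one_pow_sub hj']
      push_cast; ring
    rw [sum_congr rfl h1, ← Finset.mul_sum, alt_sum, ← mul_assoc, ← pow_add]
    rw [Even.neg_one_pow ⟨K, rfl⟩, one_mul]
  | succ m ih =>
    intro M K
    induction K with
    | zero => simp
    | succ K ih2 =>
      have split : ∀ j ∈ range (K+2),
          (-1:ℤ)^j * ((m+1+1+M).choose (K+1-j) : ℤ) * ((m+1+j).choose (m+1) : ℤ)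
          = (-1:ℤ)^j * ((m+1+(M+1)).choose (K+1-j) : ℤ) * ((m+j).choose m : ℤ)
            + (-1:ℤ)^j * ((m+1+1+M).choose (K+1-j) : ℤ) * ((m+j).choose (m+1) : ℤ) := by
        intro j hj
        have e1 : m+1+j = (m+j)+1 := by omega
        have e2 : m+1+(M+1) = m+1+1+M := by omega
        rw [e1, Nat.choose_succ_succ', e2]
        push_cast; ring
      rw [sum_congr rfl split, Finset.sum_add_distrib, ih (M+1) (K+1)]
      have h2 : ∑ j ∈ range (K+2),
          (-1:ℤ)^j * ((m+1+1+M).choose (K+1-j) : ℤ) * ((m+j).choose (m+1) : ℤ)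
          = -(M.choose K : ℤ) := by
        rw [Finset.sum_range_succ']
        have hz : (-1:ℤ)^0 * ((m+1+1+M).choose (K+1-0) : ℤ) * ((m+0).choose (m+1) : ℤ) = 0 := by
          rw [show (m+0).choose (m+1) = 0 from Nat.choose_eq_zero_of_lt (by omega)]
          push_cast; ring
        rw [hz, add_zero]
        have h3 : ∀ i ∈ range (K+1),
            (-1:ℤ)^(i+1) * ((m+1+1+M).choose (K+1-(i+1)) : ℤ) * ((m+(i+1)).choose (m+1) : ℤ)
            = -((-1:ℤ)^i * ((m+1+1+M).choose (K-i) : ℤ) * ((m+1+i).choose (m+1) : ℤ)) := by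
          intro i hi
          have e1 : K+1-(i+1) = K-i := by omega
          have e2 : m+(i+1) = m+1+i := by omega
          rw [e1, e2]; ring
        rw [sum_congr rfl h3, Finset.sum_neg_distrib, ih2]
      rw [h2]
      rw [Nat.choose_succ_succ (M) (K)]
      push_cast; ring

lemma choose_helper {N a : ℕ} (t : ℕ) (ha : a ≤ N) :
    N.choose a * (N-a).choose t = N.choose t * (N-t).choose a := by
  by_cases h : a + t ≤ N
  · have h1 := Nat.choose_mul (n := N) (Nat.le_add_right a t)
    have h2 := Nat.choose_mul (n := N) (Nat.le_add_left t a)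
    rw [Nat.add_sub_cancel_left] at h1
    rw [Nat.add_sub_cancel] at h2
    rw [← h1, Nat.choose_symm_add, h2]
  · rw [show (N-a).choose t = 0 from Nat.choose_eq_zero_of_lt (by omega)]
    by_cases ht : t ≤ N
    · rw [show (N-t).choose a = 0 from Nat.choose_eq_zero_of_lt (by omega)]
      ring
    · rw [show N.choose t = 0 from Nat.choose_eq_zero_of_lt (by omega)]
      ring

lemma lemL (K m t : ℕ) (ht : t ≤ 2*K) :
    ∑ j ∈ range (K+1), (-1:ℤ)^j * ((m+2*K+1).choose (K-j) : ℤ) * ((m+j).choose m : ℤ)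
        * ((K-j).choose t : ℤ)
      = ∑ j ∈ range (K+1), (-1:ℤ)^j * ((m+2*K+1).choose (K-j) : ℤ) * ((m+j).choose m : ℤ)
        * ((m+K+1+j).choose t : ℤ) := by
  set N := m + 2*K + 1 with hN
  -- Right side = C(N,t) * C(2K-t, K)
  have hR : ∑ j ∈ range (K+1), (-1:ℤ)^j * (N.choose (K-j) : ℤ) * ((m+j).choose m : ℤ)
        * ((m+K+1+j).choose t : ℤ)
      = (N.choose t : ℤ) * ((2*K-t).choose K : ℤ) := by
    have h1 : ∀ j ∈ range (K+1),
        (-1:ℤ)^j * (N.choose (K-j) : ℤ) * ((m+j).choose m : ℤ) * ((m+K+1+j).choose t : ℤ)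
        = (N.choose t : ℤ) * ((-1:ℤ)^j * (((N-t)).choose (K-j) : ℤ) * ((m+j).choose m : ℤ)) := by
      intro j hj
      simp only [mem_range] at hj
      have e1 : m+K+1+j = N - (K-j) := by omega
      have h2 := choose_helper (a := K-j) t (by omega : K - j ≤ N)
      have h2' : (N.choose (K-j) : ℤ) * ((N-(K-j)).choose t : ℤ)
          = (N.choose t : ℤ) * ((N-t).choose (K-j) : ℤ) := by exact_mod_cast h2
      rw [e1]
      linear_combination ((-1:ℤ)^j * ((m+j).choose m : ℤ)) * h2'
    rw [sum_congr rfl h1, ← Finset.mul_sum]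
    have e2 : N - t = (m+1) + (2*K - t) := by omega
    rw [e2]
    have := kernel m (2*K-t) K
    rw [show m + 1 + (2*K-t) = m + (1 + (2*K-t)) by omega] at e2 ⊢
    rw [show ∀ x:ℕ, m + (1 + x) = m + 1 + x by intro x; omega]
    rw [kernel m (2*K-t) K]
  rw [hR]
  by_cases htK : t ≤ K
  · -- Left side: restrict to j ≤ K - t
    have hsub : ∑ j ∈ range (K+1), (-1:ℤ)^j * (N.choose (K-j) : ℤ) * ((m+j).choose m : ℤ)
          * ((K-j).choose t : ℤ)
        = ∑ j ∈ range (K-t+1), (-1:ℤ)^j * (N.choose (K-j) : ℤ) * ((m+j).choose m : ℤ)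
          * ((K-j).choose t : ℤ) := by
      apply (Finset.sum_subset (by intro x hx; simp only [mem_range] at *; omega) _).symm
      intro j hj hj2
      simp only [mem_range] at hj hj2
      rw [show (K-j).choose t = 0 from Nat.choose_eq_zero_of_lt (by omega)]
      push_cast; ring
    rw [hsub]
    have h1 : ∀ j ∈ range (K-t+1),
        (-1:ℤ)^j * (N.choose (K-j) : ℤ) * ((m+j).choose m : ℤ) * ((K-j).choose t : ℤ)
        = (N.choose t : ℤ) * ((-1:ℤ)^j * ((N-t).choose (K-t-j) : ℤ) * ((m+j).choose m : ℤ)) := by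
      intro j hj
      simp only [mem_range] at hj
      have h2 := Nat.choose_mul (n := N) (show t ≤ K - j by omega)
      rw [show K - j - t = K - t - j by omega] at h2
      have h2' : (N.choose (K-j) : ℤ) * ((K-j).choose t : ℤ)
          = (N.choose t : ℤ) * ((N-t).choose (K-t-j) : ℤ) := by exact_mod_cast h2
      linear_combination ((-1:ℤ)^j * ((m+j).choose m : ℤ)) * h2'
    rw [sum_congr rfl h1, ← Finset.mul_sum]
    rw [show N - t = m + 1 + (2*K - t) by omega, kernel m (2*K-t) (K-t)]
    have : (2*K-t).choose (K-t) = (2*K-t).choose K := by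
      rw [← Nat.choose_symm (show K ≤ 2*K - t by omega), show (2*K-t)-K = K-t by omega]
    rw [this]
  · -- t > K : both sides zero
    have h1 : ∀ j ∈ range (K+1),
        (-1:ℤ)^j * (N.choose (K-j) : ℤ) * ((m+j).choose m : ℤ) * ((K-j).choose t : ℤ) = 0 := by
      intro j hj
      rw [show (K-j).choose t = 0 from Nat.choose_eq_zero_of_lt (by omega)]
      push_cast; ring
    rw [sum_congr rfl h1, Finset.sum_const_zero,
      show (2*K-t).choose K = 0 from Nat.choose_eq_zero_of_lt (by omega)]
    push_cast; ring

lemma lemG (K a m d : ℕ) (hd : d ≤ 2*K) :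
    ∑ j ∈ range (K+1), (-1:ℤ)^j * ((m+2*K+1).choose (K-j) : ℤ) * ((m+j).choose m : ℤ)
        * ((a+(K-j)).choose d : ℤ)
      = ∑ j ∈ range (K+1), (-1:ℤ)^j * ((m+2*K+1).choose (K-j) : ℤ) * ((m+j).choose m : ℤ)
        * ((a+(m+K+1+j)).choose d : ℤ) := by
  have expand : ∀ (x : ℕ) (c : ℤ), c * ((a+x).choose d : ℤ)
      = ∑ p ∈ Finset.HasAntidiagonal.antidiagonal d, (a.choose p.1 : ℤ) * (c * (x.choose p.2 : ℤ)) := by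
    intro x c
    rw [Nat.add_choose_eq]
    push_cast
    rw [Finset.mul_sum]
    refine sum_congr rfl fun p _ => ?_
    ring
  rw [sum_congr rfl fun j (_ : j ∈ range (K+1)) => expand (K-j) _,
      sum_congr rfl fun j (_ : j ∈ range (K+1)) => expand (m+K+1+j) _,
      Finset.sum_comm, Finset.sum_comm (s := range (K+1))]
  refine sum_congr rfl fun p hp => ?_
  simp only [Finset.HasAntidiagonal.mem_antidiagonal] at hp
  rw [← Finset.mul_sum, ← Finset.mul_sum]
  congr 1
  exact lemL K m p.2 (by omega)


/-- Upper triangularity of `U = L⁻¹B`, i.e. `C_{k,l} = D_{k,l}` for `k > l`: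
`∑_{j=0}^{k−1} (−1)^j C(n+2k−s−1,k−j−1) C(n−s+j,n−s) C(s−j−1,2l−1)
  = ∑_{j=0}^{k−1} (−1)^j C(n+2k−s−1,k−j−1) C(n−s+j,n−s) C(n+j,2l−1)`. -/
theorem Ckl_eq_Dkl_of_lt (k l s n : ℕ)
    (hl1 : 1 ≤ l) (hlk : l < k) (hks : k ≤ s) (hsn : s ≤ n) :
    ∑ j ∈ Finset.range k,
      (-1 : ℤ) ^ j * (Nat.choose (n + 2 * k - s - 1) (k - j - 1) : ℤ) *
        (Nat.choose (n - s + j) (n - s) : ℤ) * (Nat.choose (s - j - 1) (2 * l - 1) : ℤ)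
      = ∑ j ∈ Finset.range k,
          (-1 : ℤ) ^ j * (Nat.choose (n + 2 * k - s - 1) (k - j - 1) : ℤ) *
            (Nat.choose (n - s + j) (n - s) : ℤ) * (Nat.choose (n + j) (2 * l - 1) : ℤ) := by
  obtain ⟨K, rfl⟩ : ∃ K, k = K + 1 := ⟨k-1, by omega⟩
  have h1 : ∀ j ∈ Finset.range (K+1),
      (-1:ℤ)^j * ((n + 2*(K+1) - s - 1).choose (K+1-j-1) : ℤ) * ((n-s+j).choose (n-s) : ℤ)
        * ((s-j-1).choose (2*l-1) : ℤ)
      = (-1:ℤ)^j * (((n-s)+2*K+1).choose (K-j) : ℤ) * (((n-s)+j).choose (n-s) : ℤ)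
        * (((s-(K+1))+(K-j)).choose (2*l-1) : ℤ) := by
    intro j hj
    simp only [Finset.mem_range] at hj
    rw [show n + 2*(K+1) - s - 1 = (n-s)+2*K+1 by omega,
        show K+1-j-1 = K-j by omega,
        show s-j-1 = (s-(K+1))+(K-j) by omega]
  have h2 : ∀ j ∈ Finset.range (K+1),
      (-1:ℤ)^j * ((n + 2*(K+1) - s - 1).choose (K+1-j-1) : ℤ) * ((n-s+j).choose (n-s) : ℤ)
        * ((n+j).choose (2*l-1) : ℤ)
      = (-1:ℤ)^j * (((n-s)+2*K+1).choose (K-j) : ℤ) * (((n-s)+j).choose (n-s) : ℤ)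
        * (((s-(K+1))+((n-s)+K+1+j)).choose (2*l-1) : ℤ) := by
    intro j hj
    simp only [Finset.mem_range] at hj
    rw [show n + 2*(K+1) - s - 1 = (n-s)+2*K+1 by omega,
        show K+1-j-1 = K-j by omega,
        show n+j = (s-(K+1))+((n-s)+K+1+j) by omega]
  rw [Finset.sum_congr rfl h1, Finset.sum_congr rfl h2]
  exact lemG K (s-(K+1)) (n-s) (2*l-1) (by omega)
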